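/- Let T > 0, d ≥ 2, E = [0,T]×ℝ^d×ℝ^d×S^{d−1}, let w be a finite Borel measure on E, and let (μ_t)_{t∈[0,T]} be a family of Borel probability measures on ℝ^d with sup_{t≤T} ∫|v|² dμ_t < ∞ which is càdlàg with respect to the bounded-Lipschitz metric W. Suppose (μ_•, w) satisfies the continuity equation (CE). Then for every f ∈ C^{1,1}_{0,b}([0,T]×ℝ^d) and every t ∈ [0,T], ∫ f(t,·) dμ_t = ∫₀^t (∫ ∂_s f(s,·) dμ_s) ds + ∫_E 1[s ≤ t] Δf(s, v, v⋆, σ) w(ds,dv,dv⋆,dσ), where Δf(s,v,v⋆,σ) = f(s,v') + f(s,v⋆') − f(s,v) − f(s,v⋆). -/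

import Mathlib

open MeasureTheory Filter Set
open scoped RealInnerProductSpace ENNReal Topology NNReal

/-- Post-collisional velocity `v' = v − ((v−v⋆)·σ)σ`. -/
noncomputable def vPost (d : ℕ) (v vs σ : EuclideanSpace ℝ (Fin d)) :
    EuclideanSpace ℝ (Fin d) := v - ⟪v - vs, σ⟫ • σ

/-- Post-collisional velocity `v⋆' = v⋆ + ((v−v⋆)·σ)σ`. -/
noncomputable def vsPost (d : ℕ) (v vs σ : EuclideanSpace ℝ (Fin d)) :
    EuclideanSpace ℝ (Fin d) := vs + ⟪v - vs, σ⟫ • σ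

/-- The collision parameter space `E = [0,T] × ℝ^d × ℝ^d × S^{d−1}`. -/
abbrev CollisionSpace (d : ℕ) (T : ℝ) :=
  ↥(Set.Icc (0 : ℝ) T) × EuclideanSpace ℝ (Fin d) × EuclideanSpace ℝ (Fin d) ×
    ↥(Metric.sphere (0 : EuclideanSpace ℝ (Fin d)) 1)

/-- The bounded-Lipschitz metric
`W(μ,ν) = sup{∫ f dμ − ∫ f dν : ‖f‖_∞ ≤ 1, Lip(f) ≤ 1}`. -/
noncomputable def blDist (d : ℕ) (μ ν : Measure (EuclideanSpace ℝ (Fin d))) : ℝ :=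
  ⨆ f : {f : EuclideanSpace ℝ (Fin d) → ℝ // (∀ x, |f x| ≤ 1) ∧ LipschitzWith 1 f},
    (∫ x, f.1 x ∂μ) - ∫ x, f.1 x ∂ν

/-- A measure-valued path which is càdlàg with respect to the bounded-Lipschitz metric
`W` on `[0,T]`: right-continuous in `W`, with left limits in `W`. -/
def CadlagW (d : ℕ) (T : ℝ) (μ : ℝ → Measure (EuclideanSpace ℝ (Fin d))) : Prop :=
  (∀ t ∈ Set.Ico (0 : ℝ) T,
    Tendsto (fun s => blDist d (μ s) (μ t)) (nhdsWithin t (Set.Ioc t T)) (𝓝 0)) ∧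
  (∀ t ∈ Set.Ioc (0 : ℝ) T, ∃ ν : Measure (EuclideanSpace ℝ (Fin d)),
    Tendsto (fun s => blDist d (μ s) ν) (nhdsWithin t (Set.Ico 0 t)) (𝓝 0))

/-- The continuity equation (CE): for every `t ∈ [0,T]` and every bounded Lipschitz
`g : ℝ^d → ℝ`, `∫ g dμ_t = ∫ g dμ_0 + ∫_E 1[s ≤ t] Δg(v,v⋆,σ) dw`. -/
def ContinuityEq (d : ℕ) (T : ℝ) (μ : ℝ → Measure (EuclideanSpace ℝ (Fin d)))
    (w : Measure (CollisionSpace d T)) : Prop :=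
  ∀ t ∈ Set.Icc (0 : ℝ) T, ∀ g : EuclideanSpace ℝ (Fin d) → ℝ,
    (∃ C, ∀ x, |g x| ≤ C) → (∃ L : ℝ≥0, LipschitzWith L g) →
    ∫ v, g v ∂(μ t) = (∫ v, g v ∂(μ 0)) +
      ∫ p : CollisionSpace d T,
        (if (p.1 : ℝ) ≤ t then
          g (vPost d p.2.1 p.2.2.1 (p.2.2.2 : EuclideanSpace ℝ (Fin d)))
            + g (vsPost d p.2.1 p.2.2.1 (p.2.2.2 : EuclideanSpace ℝ (Fin d)))
            - g p.2.1 - g p.2.2.1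
         else 0) ∂w

/-- Membership in the class `C^{1,1}_{0,b}([0,T]×ℝ^d)`, for a function `f` together with
its time derivative `fdot`: `f(0,·) ≡ 0`; `f` bounded and uniformly Lipschitz in the
velocity variable; the time derivative exists on `[0,T]` and is bounded and uniformly
Lipschitz in the velocity variable. -/
def MemC11 (d : ℕ) (T : ℝ) (f fdot : ℝ → EuclideanSpace ℝ (Fin d) → ℝ) : Prop :=
  (∀ v, f 0 v = 0) ∧
  (∃ C, ∀ t ∈ Set.Icc (0 : ℝ) T, ∀ v, |f t v| ≤ C) ∧
  (∃ L : ℝ≥0, ∀ t ∈ Set.Icc (0 : ℝ) T, LipschitzWith L (f t)) ∧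
  (∀ v, ∀ t ∈ Set.Icc (0 : ℝ) T,
    HasDerivWithinAt (fun s => f s v) (fdot t v) (Set.Icc (0 : ℝ) T) t) ∧
  (∃ C, ∀ t ∈ Set.Icc (0 : ℝ) T, ∀ v, |fdot t v| ≤ C) ∧
  (∃ L : ℝ≥0, ∀ t ∈ Set.Icc (0 : ℝ) T, LipschitzWith L (fdot t))


section AuxLemmas

/-- The collision difference operator applied to a test function. -/
noncomputable def collDelta (d : ℕ) (T : ℝ) (g : EuclideanSpace ℝ (Fin d) → ℝ)
    (p : CollisionSpace d T) : ℝ :=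
  g (vPost d p.2.1 p.2.2.1 (p.2.2.2 : EuclideanSpace ℝ (Fin d)))
    + g (vsPost d p.2.1 p.2.2.1 (p.2.2.2 : EuclideanSpace ℝ (Fin d)))
    - g p.2.1 - g p.2.2.1

lemma continuous_vPost_comp (d : ℕ) (T : ℝ) :
    Continuous (fun p : CollisionSpace d T =>
      vPost d p.2.1 p.2.2.1 (p.2.2.2 : EuclideanSpace ℝ (Fin d))) := by
  have h1 : Continuous (fun p : CollisionSpace d T => p.2.1) := continuous_fst.comp continuous_snd
  have h2 : Continuous (fun p : CollisionSpace d T => p.2.2.1) :=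
    continuous_fst.comp (continuous_snd.comp continuous_snd)
  have h3 : Continuous (fun p : CollisionSpace d T => (p.2.2.2 : EuclideanSpace ℝ (Fin d))) :=
    continuous_subtype_val.comp (continuous_snd.comp (continuous_snd.comp continuous_snd))
  unfold vPost
  exact h1.sub (((h1.sub h2).inner (𝕜 := ℝ) h3).smul h3)

lemma continuous_vsPost_comp (d : ℕ) (T : ℝ) :
    Continuous (fun p : CollisionSpace d T =>
      vsPost d p.2.1 p.2.2.1 (p.2.2.2 : EuclideanSpace ℝ (Fin d))) := by
  have h1 : Continuous (fun p : CollisionSpace d T => p.2.1) := continuous_fst.comp continuous_snd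
  have h2 : Continuous (fun p : CollisionSpace d T => p.2.2.1) :=
    continuous_fst.comp (continuous_snd.comp continuous_snd)
  have h3 : Continuous (fun p : CollisionSpace d T => (p.2.2.2 : EuclideanSpace ℝ (Fin d))) :=
    continuous_subtype_val.comp (continuous_snd.comp (continuous_snd.comp continuous_snd))
  unfold vsPost
  exact h2.add (((h1.sub h2).inner (𝕜 := ℝ) h3).smul h3)

lemma abs_collDelta_le (d : ℕ) (T : ℝ) (g : EuclideanSpace ℝ (Fin d) → ℝ) (C : ℝ)
    (hg : ∀ x, |g x| ≤ C) (p : CollisionSpace d T) : |collDelta d T g p| ≤ 4 * C := by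
  unfold collDelta
  calc |g _ + g _ - g _ - g _| ≤ |g _ + g _ - g _| + |g _| := abs_sub _ _
    _ ≤ (|g _ + g _| + |g _|) + |g _| := by gcongr; exact abs_sub _ _
    _ ≤ ((|g _| + |g _|) + |g _|) + |g _| := by gcongr; exact abs_add_le _ _
    _ ≤ ((C + C) + C) + C := by gcongr <;> apply hg
    _ = 4 * C := by ring

end AuxLemmas

/-- if `(μ_•, w)` satisfies the continuity equation, then for every
`f ∈ C^{1,1}_{0,b}([0,T]×ℝ^d)` and `t ∈ [0,T]`,
`∫ f(t,·) dμ_t = ∫₀^t ∫ ∂_s f(s,·) dμ_s ds + ∫_E 1[s≤t] Δf(s,v,v⋆,σ) dw`. -/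
theorem continuity_equation_time_dependent (d : ℕ) (hd : 2 ≤ d) (T : ℝ) (hT : 0 < T)
    (w : Measure (CollisionSpace d T)) [IsFiniteMeasure w]
    (μ : ℝ → Measure (EuclideanSpace ℝ (Fin d)))
    (hprob : ∀ t ∈ Set.Icc (0 : ℝ) T, IsProbabilityMeasure (μ t))
    (hmom : ∃ C : ℝ≥0∞, C < ⊤ ∧ ∀ t ∈ Set.Icc (0 : ℝ) T,
      ∫⁻ v, ENNReal.ofReal (‖v‖ ^ 2) ∂(μ t) ≤ C)
    (hcadlag : CadlagW d T μ)
    (hCE : ContinuityEq d T μ w)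
    (f fdot : ℝ → EuclideanSpace ℝ (Fin d) → ℝ) (hf : MemC11 d T f fdot)
    (t : ℝ) (ht : t ∈ Set.Icc (0 : ℝ) T) :
    ∫ v, f t v ∂(μ t) =
      (∫ s in Set.Ioc (0 : ℝ) t, (∫ v, fdot s v ∂(μ s))) +
      ∫ p : CollisionSpace d T,
        (if (p.1 : ℝ) ≤ t then
          f (p.1 : ℝ) (vPost d p.2.1 p.2.2.1 (p.2.2.2 : EuclideanSpace ℝ (Fin d)))
            + f (p.1 : ℝ) (vsPost d p.2.1 p.2.2.1 (p.2.2.2 : EuclideanSpace ℝ (Fin d)))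
            - f (p.1 : ℝ) p.2.1 - f (p.1 : ℝ) p.2.2.1
         else 0) ∂w := by
  classical
  haveI : BorelSpace (CollisionSpace d T) := Prod.borelSpace
  obtain ⟨hf0, ⟨Cf, hCf⟩, ⟨Lf, hLf⟩, hder, ⟨C, hC⟩, ⟨L, hL⟩⟩ := hf
  have hC0 : 0 ≤ C := le_trans (abs_nonneg _) (hC 0 ⟨le_rfl, hT.le⟩ 0)
  haveI : IsProbabilityMeasure (μ t) := hprob t ht
  haveI : IsFiniteMeasure (volume.restrict (Set.Ioc (0:ℝ) t)) :=
    ⟨by rw [Measure.restrict_apply_univ]; exact measure_Ioc_lt_top⟩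
  have hne : ∀ᵐ (s : ℝ), s ≠ T := by
    rw [ae_iff]
    simp only [Ne, not_not, Set.setOf_eq_eq_singleton]
    exact measure_singleton T
  -- the measurable-in-time modification `G` of `fdot`
  set G : ℝ → EuclideanSpace ℝ (Fin d) → ℝ :=
    fun s v => if s ∈ Set.Ico (0:ℝ) T then fdot s v else 0 with hGdef
  have hGeq : ∀ s ∈ Set.Ico (0:ℝ) T, ∀ v, G s v = fdot s v := by
    intro s hs v; simp only [hGdef]; exact if_pos hs
  have hGb : ∀ s v, |G s v| ≤ C := by
    intro s v
    simp only [hGdef]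
    by_cases hs : s ∈ Set.Ico (0:ℝ) T
    · rw [if_pos hs]; exact hC s ⟨hs.1, hs.2.le⟩ v
    · rw [if_neg hs]; simpa using hC0
  -- joint strong measurability of `G`
  have hGmeas : StronglyMeasurable (fun q : ℝ × EuclideanSpace ℝ (Fin d) => G q.1 q.2) := by
    have hmeas : ∀ v, Measurable (fun s => G s v) := by
      intro v
      have : (fun s => G s v) = (Set.Ico (0:ℝ) T).indicator
          (fun s => derivWithin (fun r => f r v) (Set.Ici s) s) := by
        funext s
        by_cases hs : s ∈ Set.Ico (0:ℝ) T
        · have h1 : HasDerivWithinAt (fun r => f r v) (fdot s v) (Set.Ici s) s := by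
            refine (hder v s ⟨hs.1, hs.2.le⟩).mono_of_mem_nhdsWithin ?_
            have h2 : Set.Iic T ∈ 𝓝[Set.Ici s] s :=
              nhdsWithin_le_nhds (Filter.mem_of_superset (Iio_mem_nhds hs.2)
                Set.Iio_subset_Iic_self)
            filter_upwards [h2, self_mem_nhdsWithin] with x hx1 hx2
            exact ⟨le_trans hs.1 hx2, hx1⟩
          simp only [hGdef, if_pos hs, Set.indicator_of_mem hs]
          exact (h1.derivWithin (uniqueDiffOn_Ici s s Set.self_mem_Ici)).symm
        · simp only [hGdef, if_neg hs, Set.indicator_of_notMem hs]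
      rw [this]
      exact (measurable_derivWithin_Ici _).indicator measurableSet_Ico
    have hcont : ∀ s, Continuous (fun v => G s v) := by
      intro s
      by_cases hs : s ∈ Set.Ico (0:ℝ) T
      · simp only [hGdef, if_pos hs]
        exact (hL s ⟨hs.1, hs.2.le⟩).continuous
      · simp only [hGdef, if_neg hs]
        exact continuous_const
    exact (stronglyMeasurable_uncurry_of_continuous_of_stronglyMeasurable
      (u := fun (v : EuclideanSpace ℝ (Fin d)) (s : ℝ) => G s v) hcont
      (fun v => (hmeas v).stronglyMeasurable)).comp_measurable measurable_swap
  have hGm1 : ∀ x, Measurable (fun s => G s x) := fun x =>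
    hGmeas.measurable.comp (measurable_id.prodMk measurable_const)
  -- interval integrability of `G` in time
  have hintG : ∀ x, ∀ u : ℝ, 0 ≤ u → IntervalIntegrable (fun s => G s x) volume 0 u := by
    intro x u hu
    rw [intervalIntegrable_iff_integrableOn_Icc_of_le hu]
    refine Integrable.mono' (integrable_const C) ((hGm1 x).aestronglyMeasurable.restrict) ?_
    exact Eventually.of_forall (fun s => by simpa using hGb s x)
  -- fundamental theorem of calculus: `∫_{(0,u]} G(s,x) ds = f(u,x)`
  have hFTC : ∀ u ∈ Set.Icc (0:ℝ) T, ∀ x, ∫ s in Set.Ioc (0:ℝ) u, G s x = f u x := by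
    intro u hu x
    have key : ∫ s in (0:ℝ)..u, G s x = f u x - f 0 x := by
      apply intervalIntegral.integral_eq_sub_of_hasDeriv_right_of_le hu.1
      · intro s hs
        exact ((hder x s ⟨hs.1, le_trans hs.2 hu.2⟩).continuousWithinAt).mono
          (Set.Icc_subset_Icc le_rfl hu.2)
      · intro s hs
        have hsT : s < T := lt_of_lt_of_le hs.2 hu.2
        rw [hGeq s ⟨hs.1.le, hsT⟩ x]
        refine (hder x s ⟨hs.1.le, hsT.le⟩).mono_of_mem_nhdsWithin ?_
        have h2 : Set.Iic T ∈ 𝓝[Set.Ioi s] s :=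
          nhdsWithin_le_nhds (Filter.mem_of_superset (Iio_mem_nhds hsT) Set.Iio_subset_Iic_self)
        filter_upwards [h2, self_mem_nhdsWithin] with y hy1 hy2
        exact ⟨le_trans hs.1.le (le_of_lt hy2), hy1⟩
      · exact hintG x u hu.1
    rw [← intervalIntegral.integral_of_le hu.1, key, hf0, sub_zero]
  have hFTCo : ∀ u ∈ Set.Icc (0:ℝ) T, ∀ x, ∫ s in Set.Ioo (0:ℝ) u, G s x = f u x := by
    intro u hu x
    rw [← integral_Ioc_eq_integral_Ioo]
    exact hFTC u hu x
  -- the time-sliced collision integrand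
  set FF : ℝ → CollisionSpace d T → ℝ := fun s p =>
    if (s < (p.1:ℝ) ∧ (p.1:ℝ) ≤ t) then collDelta d T (G s) p else 0 with hFFdef
  have hmeas_coe : Measurable (fun p : CollisionSpace d T => (p.1 : ℝ)) :=
    measurable_subtype_coe.comp measurable_fst
  have hFFmeas : StronglyMeasurable (fun q : ℝ × CollisionSpace d T => FF q.1 q.2) := by
    have hS : MeasurableSet {q : ℝ × CollisionSpace d T | q.1 < (q.2.1:ℝ) ∧ (q.2.1:ℝ) ≤ t} := by
      refine MeasurableSet.inter ?_ ?_
      · exact measurableSet_lt measurable_fst (hmeas_coe.comp measurable_snd)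
      · exact (hmeas_coe.comp measurable_snd) measurableSet_Iic
    have hterm : ∀ (φ : CollisionSpace d T → EuclideanSpace ℝ (Fin d)), Continuous φ →
        Measurable (fun q : ℝ × CollisionSpace d T => G q.1 (φ q.2)) := fun φ hφ =>
      hGmeas.measurable.comp (measurable_fst.prodMk (hφ.measurable.comp measurable_snd))
    have hD : Measurable (fun q : ℝ × CollisionSpace d T => collDelta d T (G q.1) q.2) := by
      unfold collDelta
      exact (((hterm _ (continuous_vPost_comp d T)).add
        (hterm _ (continuous_vsPost_comp d T))).sub
        (hterm _ (continuous_fst.comp continuous_snd))).sub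
        (hterm _ (continuous_fst.comp (continuous_snd.comp continuous_snd)))
    exact (Measurable.ite hS hD measurable_const).stronglyMeasurable
  have hFFb : ∀ s p, |FF s p| ≤ 4 * C := by
    intro s p
    simp only [hFFdef]
    by_cases h : (s < (p.1:ℝ) ∧ (p.1:ℝ) ≤ t)
    · rw [if_pos h]; exact abs_collDelta_le d T (G s) C (hGb s) p
    · rw [if_neg h]; rw [abs_zero]; linarith
  -- `B s = ∫ FF s dw`
  set B : ℝ → ℝ := fun s => ∫ p, FF s p ∂w with hBdef
  have hBmeas : StronglyMeasurable B :=
    StronglyMeasurable.integral_prod_right (f := FF) hFFmeas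
  have hBb : ∀ s, |B s| ≤ 4 * C * (w Set.univ).toReal := by
    intro s
    have := norm_integral_le_of_norm_le_const (μ := w) (f := FF s) (C := 4 * C)
      (Eventually.of_forall (fun p => by simpa using hFFb s p))
    simpa [hBdef, Measure.real] using this
  have hBint : IntegrableOn B (Set.Ioc (0:ℝ) t) volume := by
    refine Integrable.mono' (integrable_const (4 * C * (w Set.univ).toReal))
      hBmeas.aestronglyMeasurable.restrict ?_
    exact Eventually.of_forall (fun s => by simpa using hBb s)
  -- integrability over `w` of the CE integrands
  have hwint : ∀ (g : EuclideanSpace ℝ (Fin d) → ℝ), Continuous g → (∀ x, |g x| ≤ C) →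
      ∀ r : ℝ, Integrable (fun p : CollisionSpace d T =>
        if (p.1:ℝ) ≤ r then collDelta d T g p else 0) w := by
    intro g hgc hgb r
    have hmeas : Measurable (fun p : CollisionSpace d T =>
        if (p.1:ℝ) ≤ r then collDelta d T g p else 0) := by
      have hD : Measurable (fun p : CollisionSpace d T => collDelta d T g p) := by
        unfold collDelta
        exact ((((hgc.comp (continuous_vPost_comp d T)).add
          (hgc.comp (continuous_vsPost_comp d T))).sub
          (hgc.comp (continuous_fst.comp continuous_snd))).sub
          (hgc.comp (continuous_fst.comp (continuous_snd.comp continuous_snd)))).measurable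
      exact Measurable.ite (hmeas_coe measurableSet_Iic) hD measurable_const
    refine Integrable.mono' (integrable_const (4 * C)) hmeas.aestronglyMeasurable ?_
    refine Eventually.of_forall (fun p => ?_)
    by_cases h : (p.1:ℝ) ≤ r
    · rw [Real.norm_eq_abs, if_pos h]; exact abs_collDelta_le d T g C hgb p
    · rw [Real.norm_eq_abs, if_neg h]; rw [abs_zero]; linarith
  -- the continuity equation in difference form, applied to `G s`
  have hCEG : ∀ s, s ∈ Set.Ioc (0:ℝ) t → s < T →
      (∫ v, G s v ∂(μ t)) = (∫ v, G s v ∂(μ s)) + B s := by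
    intro s hs hsT
    have hsIcc : s ∈ Set.Icc (0:ℝ) T := ⟨hs.1.le, hsT.le⟩
    have hsIco : s ∈ Set.Ico (0:ℝ) T := ⟨hs.1.le, hsT⟩
    have hgfun : G s = fdot s := funext (fun v => hGeq s hsIco v)
    have hbdd : ∃ Cg, ∀ x, |fdot s x| ≤ Cg := ⟨C, hC s hsIcc⟩
    have hlip : ∃ Lg : ℝ≥0, LipschitzWith Lg (fdot s) := ⟨L, hL s hsIcc⟩
    have h1 := hCE t ht (fdot s) hbdd hlip
    have h2 := hCE s hsIcc (fdot s) hbdd hlip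
    have hcont : Continuous (fdot s) := (hL s hsIcc).continuous
    have hi1 := hwint (fdot s) hcont (hC s hsIcc) t
    have hi2 := hwint (fdot s) hcont (hC s hsIcc) s
    have hsub : (∫ v, fdot s v ∂(μ t)) - (∫ v, fdot s v ∂(μ s)) =
        ∫ p : CollisionSpace d T,
          ((if (p.1:ℝ) ≤ t then collDelta d T (fdot s) p else 0)
            - (if (p.1:ℝ) ≤ s then collDelta d T (fdot s) p else 0)) ∂w := by
      rw [integral_sub hi1 hi2]
      rw [show (∫ v, fdot s v ∂(μ t)) = (∫ v, fdot s v ∂(μ 0)) +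
        ∫ p : CollisionSpace d T,
          (if (p.1:ℝ) ≤ t then collDelta d T (fdot s) p else 0) ∂w from h1]
      rw [show (∫ v, fdot s v ∂(μ s)) = (∫ v, fdot s v ∂(μ 0)) +
        ∫ p : CollisionSpace d T,
          (if (p.1:ℝ) ≤ s then collDelta d T (fdot s) p else 0) ∂w from h2]
      ring
    have hptw : ∀ p : CollisionSpace d T,
        ((if (p.1:ℝ) ≤ t then collDelta d T (fdot s) p else 0)
          - (if (p.1:ℝ) ≤ s then collDelta d T (fdot s) p else 0)) = FF s p := by
      intro p
      simp only [hFFdef]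
      rcases le_or_gt (p.1:ℝ) s with h | h
      · rw [if_pos (le_trans h hs.2), if_pos h,
          if_neg (by simp only [not_and]; intro hc; exact absurd h (not_le.mpr hc)), sub_self]
      · rcases le_or_gt (p.1:ℝ) t with h' | h'
        · rw [if_pos h', if_neg (not_le.mpr h), if_pos ⟨h, h'⟩, sub_zero, hgfun]
        · rw [if_neg (not_le.mpr h'), if_neg (not_le.mpr h),
            if_neg (fun hc => absurd hc.2 (not_le.mpr h')), sub_zero]
    have hfin : (∫ v, fdot s v ∂(μ t)) - (∫ v, fdot s v ∂(μ s)) = B s := by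
      rw [hsub, hBdef]
      exact integral_congr_ae (Eventually.of_forall hptw)
    rw [hgfun]
    linarith [hfin]
  -- Step 1: FTC + Fubini over `μ t × Leb`
  have step1 : ∫ v, f t v ∂(μ t) = ∫ s in Set.Ioc (0:ℝ) t, (∫ v, G s v ∂(μ t)) := by
    have h1 : ∫ v, f t v ∂(μ t) = ∫ v, (∫ s in Set.Ioc (0:ℝ) t, G s v) ∂(μ t) :=
      integral_congr_ae (Eventually.of_forall (fun v => (hFTC t ht v).symm))
    rw [h1]
    exact integral_integral_swap (f := fun v s => G s v) <| by
      refine Integrable.mono' (integrable_const C)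
        ((hGmeas.comp_measurable measurable_swap).aestronglyMeasurable) ?_
      exact Eventually.of_forall (fun q => by simpa [Function.uncurry] using hGb q.2 q.1)
  -- Step 2: apply the CE slice-wise and split the integral
  have hmuint : IntegrableOn (fun s => ∫ v, G s v ∂(μ t)) (Set.Ioc (0:ℝ) t) volume := by
    refine Integrable.mono' (integrable_const C)
      (StronglyMeasurable.integral_prod_right (f := G) hGmeas).aestronglyMeasurable.restrict ?_
    refine Eventually.of_forall (fun s => ?_)
    have := norm_integral_le_of_norm_le_const (μ := μ t) (f := G s) (C := C)
      (Eventually.of_forall (fun v => by simpa using hGb s v))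
    simpa using this
  have hAint : IntegrableOn (fun s => ∫ v, G s v ∂(μ s)) (Set.Ioc (0:ℝ) t) volume := by
    have hcongr : (fun s => (∫ v, G s v ∂(μ t)) - B s) =ᵐ[volume.restrict (Set.Ioc (0:ℝ) t)]
        (fun s => ∫ v, G s v ∂(μ s)) := by
      filter_upwards [ae_restrict_mem measurableSet_Ioc, ae_restrict_of_ae hne] with s hs hsne
      have hsT : s < T := lt_of_le_of_ne (le_trans hs.2 ht.2) hsne
      have := hCEG s hs hsT
      linarith [this]
    exact (hmuint.sub hBint).congr hcongr
  have step2 : ∫ s in Set.Ioc (0:ℝ) t, (∫ v, G s v ∂(μ t)) =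
      (∫ s in Set.Ioc (0:ℝ) t, (∫ v, G s v ∂(μ s))) + ∫ s in Set.Ioc (0:ℝ) t, B s := by
    have h1 : ∫ s in Set.Ioc (0:ℝ) t, (∫ v, G s v ∂(μ t)) =
        ∫ s in Set.Ioc (0:ℝ) t, ((∫ v, G s v ∂(μ s)) + B s) := by
      refine setIntegral_congr_ae measurableSet_Ioc ?_
      filter_upwards [hne] with s hsne hs
      exact hCEG s hs (lt_of_le_of_ne (le_trans hs.2 ht.2) hsne)
    rw [h1, integral_add hAint hBint]
  -- Step 3: Fubini over `Leb × w` and FTC again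
  have hFFint : Integrable (fun q : ℝ × CollisionSpace d T => FF q.1 q.2)
      ((volume.restrict (Set.Ioc (0:ℝ) t)).prod w) := by
    refine Integrable.mono' (integrable_const (4 * C)) hFFmeas.aestronglyMeasurable ?_
    exact Eventually.of_forall (fun q => by simpa using hFFb q.1 q.2)
  have step3 : ∫ s in Set.Ioc (0:ℝ) t, B s =
      ∫ p : CollisionSpace d T,
        (if (p.1 : ℝ) ≤ t then
          f (p.1 : ℝ) (vPost d p.2.1 p.2.2.1 (p.2.2.2 : EuclideanSpace ℝ (Fin d)))
            + f (p.1 : ℝ) (vsPost d p.2.1 p.2.2.1 (p.2.2.2 : EuclideanSpace ℝ (Fin d)))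
            - f (p.1 : ℝ) p.2.1 - f (p.1 : ℝ) p.2.2.1
         else 0) ∂w := by
    have hswap : ∫ s in Set.Ioc (0:ℝ) t, B s =
        ∫ p : CollisionSpace d T, (∫ s in Set.Ioc (0:ℝ) t, FF s p) ∂w := by
      simp only [hBdef]
      exact integral_integral_swap (f := FF) hFFint
    rw [hswap]
    refine integral_congr_ae (Eventually.of_forall (fun p => ?_))
    have hmem : (p.1 : ℝ) ∈ Set.Icc (0:ℝ) T := p.1.2
    have hu0 : (0:ℝ) ≤ (p.1:ℝ) := hmem.1
    have huT : (p.1:ℝ) ≤ T := hmem.2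
    show (∫ s in Set.Ioc (0:ℝ) t, FF s p) =
      if (p.1 : ℝ) ≤ t then
        f (p.1 : ℝ) (vPost d p.2.1 p.2.2.1 (p.2.2.2 : EuclideanSpace ℝ (Fin d)))
          + f (p.1 : ℝ) (vsPost d p.2.1 p.2.2.1 (p.2.2.2 : EuclideanSpace ℝ (Fin d)))
          - f (p.1 : ℝ) p.2.1 - f (p.1 : ℝ) p.2.2.1
       else 0
    by_cases hpt : (p.1:ℝ) ≤ t
    · have h1 : ∀ s, FF s p =
          (Set.Iio (p.1:ℝ)).indicator (fun s => collDelta d T (G s) p) s := by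
        intro s
        by_cases h : s < (p.1:ℝ)
        · simp only [hFFdef, Set.indicator_of_mem (show s ∈ Set.Iio (p.1:ℝ) from h)]
          exact if_pos ⟨h, hpt⟩
        · simp only [hFFdef, Set.indicator_of_notMem (show s ∉ Set.Iio (p.1:ℝ) from h)]
          exact if_neg (fun hc => h hc.1)
      rw [if_pos hpt]
      calc ∫ s in Set.Ioc (0:ℝ) t, FF s p
          = ∫ s in Set.Ioc (0:ℝ) t,
              (Set.Iio (p.1:ℝ)).indicator (fun s => collDelta d T (G s) p) s := by
            exact setIntegral_congr_ae measurableSet_Ioc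
              (Eventually.of_forall (fun s _ => h1 s))
        _ = ∫ s in Set.Ioc (0:ℝ) t ∩ Set.Iio (p.1:ℝ), collDelta d T (G s) p := by
            rw [setIntegral_indicator measurableSet_Iio]
        _ = ∫ s in Set.Ioo (0:ℝ) (p.1:ℝ), collDelta d T (G s) p := by
            have hseteq : Set.Ioc (0:ℝ) t ∩ Set.Iio (p.1:ℝ) = Set.Ioo (0:ℝ) (p.1:ℝ) := by
              ext s
              constructor
              · rintro ⟨⟨hs1, _⟩, hs2⟩; exact ⟨hs1, hs2⟩
              · rintro ⟨hs1, hs2⟩; exact ⟨⟨hs1, le_trans hs2.le hpt⟩, hs2⟩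
            rw [hseteq]
        _ = _ := by
            have hIint : ∀ x, IntegrableOn (fun s => G s x)
                (Set.Ioo (0:ℝ) (p.1:ℝ)) volume := fun x =>
              ((hintG x (p.1:ℝ) hu0).1).mono_set Set.Ioo_subset_Ioc_self
            show ∫ s in Set.Ioo (0:ℝ) (p.1:ℝ),
                (G s (vPost d p.2.1 p.2.2.1 (p.2.2.2 : EuclideanSpace ℝ (Fin d)))
                  + G s (vsPost d p.2.1 p.2.2.1 (p.2.2.2 : EuclideanSpace ℝ (Fin d)))
                  - G s p.2.1 - G s p.2.2.1)
              = f (p.1:ℝ) (vPost d p.2.1 p.2.2.1 (p.2.2.2 : EuclideanSpace ℝ (Fin d)))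
                  + f (p.1:ℝ) (vsPost d p.2.1 p.2.2.1 (p.2.2.2 : EuclideanSpace ℝ (Fin d)))
                  - f (p.1:ℝ) p.2.1 - f (p.1:ℝ) p.2.2.1
            set a := vPost d p.2.1 p.2.2.1 (p.2.2.2 : EuclideanSpace ℝ (Fin d)) with ha
            set b := vsPost d p.2.1 p.2.2.1 (p.2.2.2 : EuclideanSpace ℝ (Fin d)) with hb
            have h12 := integral_sub (μ := volume.restrict (Set.Ioo (0:ℝ) (p.1:ℝ)))
              (((hIint a).add (hIint b)).sub (hIint p.2.1)) (hIint p.2.2.1)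
            have h13 := integral_sub (μ := volume.restrict (Set.Ioo (0:ℝ) (p.1:ℝ)))
              ((hIint a).add (hIint b)) (hIint p.2.1)
            have h14 := integral_add (μ := volume.restrict (Set.Ioo (0:ℝ) (p.1:ℝ)))
              (hIint a) (hIint b)
            have e1 := hFTCo (p.1:ℝ) ⟨hu0, huT⟩ a
            have e2 := hFTCo (p.1:ℝ) ⟨hu0, huT⟩ b
            have e3 := hFTCo (p.1:ℝ) ⟨hu0, huT⟩ p.2.1
            have e4 := hFTCo (p.1:ℝ) ⟨hu0, huT⟩ p.2.2.1
            simp only [Pi.add_apply, Pi.sub_apply] at h12 h13 h14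
            linarith [h12, h13, h14, e1, e2, e3, e4]
    · have h0 : ∀ s, FF s p = 0 := fun s => by
        simp only [hFFdef, if_neg (fun hc : _ ∧ _ => hpt hc.2)]
      rw [if_neg hpt]
      simp only [h0, integral_zero]
  -- Step 4: replace `G` by `fdot` in the time integral
  have step4 : ∫ s in Set.Ioc (0:ℝ) t, (∫ v, G s v ∂(μ s)) =
      ∫ s in Set.Ioc (0:ℝ) t, (∫ v, fdot s v ∂(μ s)) := by
    refine setIntegral_congr_ae measurableSet_Ioc ?_
    filter_upwards [hne] with s hsne hs
    have hsT : s < T := lt_of_le_of_ne (le_trans hs.2 ht.2) hsne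
    simp only [hGeq s ⟨hs.1.le, hsT⟩]
  rw [step1, step2, step3, step4]
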